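/- The function m ↦ V_m is differentiable on (0, ∞), and for every m > 0 its derivative equals d/dm V_m = −16πm + 4π ∫_{2m}^∞ s (1 + s² − 2m s^(−1))^(−3/2) ds. -/

import Mathlib

open Real MeasureTheory Filter

/-- Volume of the centered coordinate ball of radius `R` in hyperbolic space. -/
noncomputable def hypVol (R : ℝ) : ℝ :=
  4 * π * ∫ s in (0:ℝ)..R, s ^ 2 / Real.sqrt (1 + s ^ 2)

/-- Volume of the centered coordinate ball of radius `R` in
Schwarzschild-anti-deSitter of mass `m`. -/
noncomputable def sAdSVol (m R : ℝ) : ℝ :=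
  4 * π * ∫ s in (2 * m)..R, s ^ 2 / Real.sqrt (1 + s ^ 2 - 2 * m / s)

/-- The renormalized volume `V_m = lim_{R→∞} (Vol_m(R) - Vol₀(R))` of
Schwarzschild-anti-deSitter of mass `m`. -/
noncomputable def renormVol (m : ℝ) : ℝ :=
  limUnder atTop (fun R => sAdSVol m R - hypVol R)

open Set Topology

noncomputable def fInt (m s : ℝ) : ℝ := s ^ 2 / Real.sqrt (1 + s ^ 2 - 2 * m / s)
noncomputable def kInt (m s : ℝ) : ℝ := s * (1 + s ^ 2 - 2 * m / s) ^ (-(3:ℝ)/2)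
noncomputable def f0 (s : ℝ) : ℝ := s ^ 2 / Real.sqrt (1 + s ^ 2)

lemma hpos {m s : ℝ} (hm : 0 < m) (hs : 2 * m ≤ s) : s ^ 2 ≤ 1 + s ^ 2 - 2 * m / s := by
  have hs0 : 0 < s := lt_of_lt_of_le (by linarith) hs
  have : 2 * m / s ≤ 1 := by rw [div_le_one hs0]; linarith
  linarith

lemma hasDerivAt_fInt {μ s : ℝ} (hs : 0 < s) (hh : 0 < 1 + s ^ 2 - 2 * μ / s) :
    HasDerivAt (fun μ => fInt μ s) (kInt μ s) μ := by
  have hh' : HasDerivAt (fun μ : ℝ => 1 + s ^ 2 - 2 * μ / s) (-(2 / s)) μ := by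
    have : HasDerivAt (fun μ : ℝ => 2 * μ / s) (2 / s) μ := by
      simpa [mul_comm] using ((hasDerivAt_id μ).const_mul 2).div_const s
    exact ((hasDerivAt_const μ (1 + s ^ 2)).sub this).congr_deriv (by ring)
  have hsq := hh'.sqrt (ne_of_gt hh)
  have hsqrtpos : 0 < Real.sqrt (1 + s ^ 2 - 2 * μ / s) := Real.sqrt_pos.2 hh
  have hdiv : HasDerivAt (fun y => fInt y s) _ μ := (hasDerivAt_const μ (s ^ 2)).div hsq (ne_of_gt hsqrtpos)
  convert hdiv using 1
  have h32 : (1 + s ^ 2 - 2 * μ / s) ^ (-(3:ℝ)/2)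
      = 1 / ((1 + s ^ 2 - 2 * μ / s) * Real.sqrt (1 + s ^ 2 - 2 * μ / s)) := by
    rw [show (-(3:ℝ)/2) = -(3/2) by ring, Real.rpow_neg hh.le,
      show (3:ℝ)/2 = 1 + 1/2 by ring, Real.rpow_add hh, Real.rpow_one,
      ← Real.sqrt_eq_rpow, one_div]
  rw [kInt, h32]
  set u := Real.sqrt (1 + s ^ 2 - 2 * μ / s) with hu
  have h2 : u ^ 2 = 1 + s ^ 2 - 2 * μ / s := Real.sq_sqrt hh.le
  rw [← h2]
  field_simp
  ring

lemma contAt_fInt {m s₀ : ℝ} (hs : s₀ ≠ 0) (hh : 0 < 1 + s₀ ^ 2 - 2 * m / s₀) :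
    ContinuousAt (fun s => fInt m s) s₀ := by
  have hden : ContinuousAt (fun s => Real.sqrt (1 + s ^ 2 - 2 * m / s)) s₀ :=
    Real.continuous_sqrt.continuousAt.comp <| by fun_prop (disch := assumption)
  exact ContinuousAt.div (continuousAt_pow s₀ 2) hden (by positivity)

lemma contAt_kInt {m s₀ : ℝ} (hs : s₀ ≠ 0) (hh : 0 < 1 + s₀ ^ 2 - 2 * m / s₀) :
    ContinuousAt (fun s => kInt m s) s₀ := by
  have hb : ContinuousAt (fun s : ℝ => 1 + s ^ 2 - 2 * m / s) s₀ := by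
    fun_prop (disch := assumption)
  exact continuousAt_id.mul <|
    hb.rpow_const (Or.inl (ne_of_gt hh))

lemma contOn_fInt {m a : ℝ} (hm : 0 < m) (ha : 2 * m ≤ a) :
    ContinuousOn (fun s => fInt m s) (Ici a) := fun s hs => by
  have hs' : 2 * m ≤ s := le_trans ha hs
  have hs0 : 0 < s := lt_of_lt_of_le (by linarith) hs'
  have := hpos hm hs'
  exact (contAt_fInt (ne_of_gt hs0) (by nlinarith)).continuousWithinAt

lemma contOn_kInt {m a : ℝ} (hm : 0 < m) (ha : 2 * m ≤ a) :
    ContinuousOn (fun s => kInt m s) (Ici a) := fun s hs => by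
  have hs' : 2 * m ≤ s := le_trans ha hs
  have hs0 : 0 < s := lt_of_lt_of_le (by linarith) hs'
  have := hpos hm hs'
  exact (contAt_kInt (ne_of_gt hs0) (by nlinarith)).continuousWithinAt

lemma cont_f0 : Continuous f0 := by
  apply Continuous.div (by fun_prop) (by fun_prop)
  intro s
  have : (0:ℝ) < 1 + s ^ 2 := by positivity
  positivity

lemma kInt_le {m s : ℝ} (hm : 0 < m) (hs : 2 * m ≤ s) : kInt m s ≤ s ^ (-2:ℝ) := by
  have hs0 : 0 < s := lt_of_lt_of_le (by linarith) hs
  have h1 : s ^ 2 ≤ 1 + s ^ 2 - 2 * m / s := hpos hm hs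
  have hsq : (0:ℝ) < s ^ 2 := by positivity
  have h2 : (1 + s ^ 2 - 2 * m / s) ^ (-(3:ℝ)/2) ≤ (s ^ 2) ^ (-(3:ℝ)/2) :=
    Real.rpow_le_rpow_of_nonpos hsq h1 (by norm_num)
  have h3 : (s ^ 2 : ℝ) ^ (-(3:ℝ)/2) = s ^ (-3:ℝ) := by
    rw [← Real.rpow_natCast s 2, ← Real.rpow_mul hs0.le]
    norm_num
  calc kInt m s ≤ s * s ^ (-3:ℝ) := by
        rw [kInt]; rw [h3] at h2; exact mul_le_mul_of_nonneg_left h2 hs0.le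
    _ = s ^ (-2:ℝ) := by
        rw [show s * s ^ (-3:ℝ) = s ^ (1:ℝ) * s ^ (-3:ℝ) by rw [Real.rpow_one],
          ← Real.rpow_add hs0]
        norm_num

lemma kInt_nonneg {m s : ℝ} (hm : 0 < m) (hs : 2 * m ≤ s) : 0 ≤ kInt m s := by
  have hs0 : 0 < s := lt_of_lt_of_le (by linarith) hs
  have h1 : (0:ℝ) < 1 + s ^ 2 - 2 * m / s := lt_of_lt_of_le (by positivity) (hpos hm hs)
  exact le_of_lt (mul_pos hs0 (Real.rpow_pos_of_pos h1 _))

lemma integrableOn_kInt {m : ℝ} (hm : 0 < m) {a : ℝ} (ha : 2 * m ≤ a) :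
    IntegrableOn (fun s => kInt m s) (Ioi a) := by
  have ha0 : 0 < a := lt_of_lt_of_le (by linarith) ha
  apply Integrable.mono' (integrableOn_Ioi_rpow_of_lt (by norm_num : (-2:ℝ) < -1) ha0)
  · exact ((contOn_kInt hm ha).mono Ioi_subset_Ici_self).aestronglyMeasurable measurableSet_Ioi
  · filter_upwards [ae_restrict_mem measurableSet_Ioi] with s hs
    have h2m : 2 * m ≤ s := le_trans ha (le_of_lt hs)
    rw [Real.norm_eq_abs, abs_of_nonneg (kInt_nonneg hm h2m)]
    exact kInt_le hm h2m

lemma fInt_sub_f0_nonneg {m s : ℝ} (hm : 0 < m) (hs : 2 * m ≤ s) : 0 ≤ fInt m s - f0 s := by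
  have hs0 : 0 < s := lt_of_lt_of_le (by linarith) hs
  have ha : (0:ℝ) < 1 + s ^ 2 - 2 * m / s := lt_of_lt_of_le (by positivity) (hpos hm hs)
  have hab : 1 + s ^ 2 - 2 * m / s ≤ 1 + s ^ 2 := by
    have : 0 < 2 * m / s := by positivity
    linarith
  have := Real.sqrt_le_sqrt hab
  have h1 : 0 < Real.sqrt (1 + s ^ 2 - 2 * m / s) := Real.sqrt_pos.2 ha
  rw [fInt, f0, sub_nonneg]
  exact div_le_div_of_nonneg_left (by positivity) h1 this

lemma fInt_sub_f0_le {m s : ℝ} (hm : 0 < m) (hs : 2 * m ≤ s) :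
    fInt m s - f0 s ≤ m * s ^ (-2:ℝ) := by
  have hs0 : 0 < s := lt_of_lt_of_le (by linarith) hs
  have ha : (0:ℝ) < 1 + s ^ 2 - 2 * m / s := lt_of_lt_of_le (by positivity) (hpos hm hs)
  have hb : (0:ℝ) < 1 + s ^ 2 := by positivity
  set u := Real.sqrt (1 + s ^ 2 - 2 * m / s) with hu
  set v := Real.sqrt (1 + s ^ 2) with hv
  have hu0 : 0 < u := Real.sqrt_pos.2 ha
  have hv0 : 0 < v := Real.sqrt_pos.2 hb
  have hus : s ≤ u := by
    rw [hu]
    exact (Real.le_sqrt' hs0).2 (hpos hm hs)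
  have hvs : s ≤ v := by
    rw [hv]
    exact (Real.le_sqrt' hs0).2 (by linarith)
  have hu2 : u ^ 2 = 1 + s ^ 2 - 2 * m / s := Real.sq_sqrt ha.le
  have hv2 : v ^ 2 = 1 + s ^ 2 := Real.sq_sqrt hb.le
  have hdiff : (v - u) * (v + u) = 2 * m / s := by
    have h1 : (v - u) * (v + u) = v ^ 2 - u ^ 2 := by ring
    rw [h1, hu2, hv2]; ring
  have key : fInt m s - f0 s = 2 * m * s / (u * v * (v + u)) := by
    rw [fInt, f0, ← hu, ← hv]
    rw [div_sub_div _ _ (ne_of_gt hu0) (ne_of_gt hv0)]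
    rw [div_eq_div_iff (by positivity) (by positivity)]
    calc (s ^ 2 * v - u * s ^ 2) * (u * v * (v + u))
        = s ^ 2 * ((v - u) * (v + u)) * (u * v) := by ring
      _ = s ^ 2 * (2 * m / s) * (u * v) := by rw [hdiff]
      _ = 2 * m * s * (u * v) := by
          field_simp
  rw [key]
  have hrp : s ^ (-2:ℝ) = 1 / s ^ 2 := by
    rw [Real.rpow_neg hs0.le, show ((2:ℝ)) = ((2:ℕ):ℝ) by norm_num, Real.rpow_natCast, one_div]
  rw [hrp]
  rw [div_le_iff₀ (by positivity)]
  have h4 : s * s ≤ u * v := mul_le_mul hus hvs hs0.le (by linarith)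
  have h5 : s + s ≤ v + u := by linarith
  have h2s : 2 * s ^ 3 ≤ u * v * (v + u) := by
    have := mul_le_mul h4 h5 (by linarith) (by positivity)
    nlinarith [this]
  have : m * (1 / s ^ 2) * (2 * s ^ 3) ≤ m * (1 / s ^ 2) * (u * v * (v + u)) := by
    apply mul_le_mul_of_nonneg_left h2s; positivity
  calc 2 * m * s = m * (1 / s ^ 2) * (2 * s ^ 3) := by field_simp
    _ ≤ _ := this

lemma integrableOn_fInt_sub_f0 {m : ℝ} (hm : 0 < m) :
    IntegrableOn (fun s => fInt m s - f0 s) (Ioi (2 * m)) := by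
  have ha0 : 0 < 2 * m := by linarith
  apply Integrable.mono'
    ((integrableOn_Ioi_rpow_of_lt (by norm_num : (-2:ℝ) < -1) ha0).const_mul m)
  · exact (((contOn_fInt hm le_rfl).sub (cont_f0.continuousOn)).mono
      Ioi_subset_Ici_self).aestronglyMeasurable measurableSet_Ioi
  · filter_upwards [ae_restrict_mem measurableSet_Ioi] with s hs
    have h2m : 2 * m ≤ s := le_of_lt hs
    rw [Real.norm_eq_abs, abs_of_nonneg (fInt_sub_f0_nonneg hm h2m)]
    exact fInt_sub_f0_le hm h2m

lemma keyPos {m : ℝ} (hm : 0 < m) {μ s : ℝ} (hμ : |μ - m| ≤ min (m/2) (m^3/8))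
    (hs : 2*m - 2*(min (m/2) (m^3/8)) ≤ s) : m^2/2 ≤ 1 + s^2 - 2*μ/s := by
  set δ := min (m/2) (m^3/8) with hδdef
  have hδ1 : δ ≤ m/2 := min_le_left _ _
  have hδ2 : δ ≤ m^3/8 := min_le_right _ _
  have hδ0 : 0 < δ := lt_min (by linarith) (by positivity)
  have hμ1 : μ ≤ m + δ := by have := abs_le.1 hμ; linarith [this.2]
  have hsm : m ≤ s := by linarith
  have hs0 : 0 < s := by linarith
  have hdiv : 2*μ/s ≤ 1 + m^2/2 := by
    rw [div_le_iff₀ hs0]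
    have h1 : 2*μ ≤ 2*(m + δ) := by linarith
    have h2 : 2*(m + δ) ≤ (1 + m^2/2) * (2*m - 2*δ) := by
      nlinarith [mul_le_mul_of_nonneg_right hδ1 (sq_nonneg m)]
    have h3 : (1 + m^2/2) * (2*m - 2*δ) ≤ (1 + m^2/2) * s := by
      apply mul_le_mul_of_nonneg_left hs (by positivity)
    linarith
  nlinarith [hsm, hdiv]

lemma lemA {m R : ℝ} (hm : 0 < m) (hR : 2 * m < R) :
    HasDerivAt (fun μ => ∫ s in (2*μ)..R, fInt μ s)
      (-(4*m) + ∫ s in (2*m)..R, kInt m s) m := by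
  set δ := min (m/2) (m^3/8) with hδdef
  have hδ1 : δ ≤ m/2 := min_le_left _ _
  have hδ0 : 0 < δ := lt_min (by linarith) (by positivity)
  have key : ∀ μ ∈ Metric.ball m δ, ∀ s, 2*m - 2*δ ≤ s → m^2/2 ≤ 1 + s^2 - 2*μ/s := by
    intro μ hμ s hs
    exact keyPos hm (le_of_lt (by rwa [Metric.mem_ball, Real.dist_eq] at hμ)) hs
  have hspos : ∀ s : ℝ, 2*m - 2*δ ≤ s → 0 < s := fun s hs => by linarith
  -- continuity of fInt μ in s, for μ in the ball
  have hcont : ∀ μ ∈ Metric.ball m δ, ContinuousOn (fun s => fInt μ s) (Ici (2*m - 2*δ)) := by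
    intro μ hμ s hs
    have h1 := key μ hμ s hs
    exact (contAt_fInt (ne_of_gt (hspos s hs)) (by nlinarith)).continuousWithinAt
  have hcontk : ∀ μ ∈ Metric.ball m δ, ContinuousOn (fun s => kInt μ s) (Ici (2*m - 2*δ)) := by
    intro μ hμ s hs
    have h1 := key μ hμ s hs
    exact (contAt_kInt (ne_of_gt (hspos s hs)) (by nlinarith)).continuousWithinAt
  have hmem : m ∈ Metric.ball m δ := Metric.mem_ball_self hδ0
  have huIoc : Set.uIoc (2*m) R ⊆ Ici (2*m - 2*δ) := by
    rw [Set.uIoc_of_le hR.le]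
    intro s hs
    have := hs.1
    simp only [mem_Ici]
    linarith
  have huIcc : Set.uIcc (2*m) R ⊆ Ici (2*m - 2*δ) := by
    rw [Set.uIcc_of_le hR.le]
    intro s hs
    have := hs.1
    simp only [mem_Ici]
    linarith
  -- the fixed-endpoint parametric integral
  have hφ : HasDerivAt (fun μ => ∫ s in (2*m)..R, fInt μ s)
      (∫ s in (2*m)..R, kInt m s) m := by
    have := intervalIntegral.hasDerivAt_integral_of_dominated_loc_of_deriv_le
      (F := fun μ s => fInt μ s) (F' := fun μ s => kInt μ s)
      (bound := fun s => (m^2/2) ^ (-(3:ℝ)/2) * s)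
      (a := 2*m) (b := R) (x₀ := m) (μ := volume) (Metric.ball_mem_nhds m hδ0)
      ?_ ?_ ?_ ?_ ?_ ?_
    · exact this.2
    · filter_upwards [Metric.ball_mem_nhds m hδ0] with μ hμ
      exact ((hcont μ hμ).mono huIoc).aestronglyMeasurable measurableSet_uIoc
    · exact ((hcont m hmem).mono huIcc).intervalIntegrable
    · exact ((hcontk m hmem).mono huIoc).aestronglyMeasurable measurableSet_uIoc
    · apply ae_of_all
      intro t ht μ hμ
      have ht' : 2*m - 2*δ ≤ t := huIoc ht
      have ht0 : 0 < t := hspos t ht'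
      have hkey := key μ hμ t ht'
      have hhpos : (0:ℝ) < 1 + t^2 - 2*μ/t := by nlinarith
      simp only [kInt]
      rw [Real.norm_eq_abs,
        abs_of_nonneg (le_of_lt (mul_pos ht0 (Real.rpow_pos_of_pos hhpos _)))]
      rw [mul_comm ((m^2/2 : ℝ) ^ (-(3:ℝ)/2)) t]
      exact mul_le_mul_of_nonneg_left
        (Real.rpow_le_rpow_of_nonpos (by positivity) hkey (by norm_num)) ht0.le
    · exact (continuous_const.mul continuous_id).intervalIntegrable _ _
    · apply ae_of_all
      intro t ht μ hμ
      have ht' : 2*m - 2*δ ≤ t := huIoc ht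
      have hkey := key μ hμ t ht'
      exact hasDerivAt_fInt (hspos t ht') (by nlinarith)
  -- the FTC part
  have hval : fInt m (2*m) = 2*m := by
    rw [fInt]
    have e1 : 1 + (2*m)^2 - 2*m/(2*m) = (2*m)^2 := by
      rw [div_self (by positivity : (2*m:ℝ) ≠ 0)]; ring
    rw [e1, Real.sqrt_sq (by positivity), sq, mul_div_assoc,
      div_self (by positivity : (2*m:ℝ) ≠ 0), mul_one]
  have hA1 : HasDerivAt (fun μ => ∫ s in (2*μ)..(2*m), fInt m s) (-(4*m)) m := by
    have hopen : IsOpen (Ioi (2*m - 2*δ)) := isOpen_Ioi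
    have hconm : ContinuousOn (fun s => fInt m s) (Ioi (2*m - 2*δ)) :=
      (hcont m hmem).mono Ioi_subset_Ici_self
    have hmem2 : (2*m : ℝ) ∈ Ioi (2*m - 2*δ) := by simp only [mem_Ioi]; linarith
    have hG : HasDerivAt (fun y => ∫ s in (2*m)..y, fInt m s) (fInt m (2*m)) (2*m) := by
      apply intervalIntegral.integral_hasDerivAt_right
        (((hcont m hmem).mono (by
          rw [Set.uIcc_self]
          intro x hx
          simp only [mem_singleton_iff] at hx
          subst hx
          simp only [mem_Ici]
          linarith)).intervalIntegrable)
        (hconm.stronglyMeasurableAtFilter hopen _ hmem2)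
        (hconm.continuousAt (hopen.mem_nhds hmem2))
    have h2μ : HasDerivAt (fun μ : ℝ => 2*μ) 2 m := by
      simpa using (hasDerivAt_id m).const_mul 2
    have h3 : HasDerivAt (fun μ => -∫ s in (2*m)..(2*μ), fInt m s)
        (-(fInt m (2*m) * 2)) m := by
      exact (hG.comp m h2μ).neg
    have h4 : (fun μ => ∫ s in (2*μ)..(2*m), fInt m s)
        = (fun μ => -∫ s in (2*m)..(2*μ), fInt m s) := by
      funext μ
      rw [intervalIntegral.integral_symm]
    rw [h4]
    convert h3 using 1
    rw [hval]; ring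
  -- the remainder term
  set C0 : ℝ := (m^2/2) ^ (-(3:ℝ)/2) with hC0
  have hC0pos : 0 < C0 := Real.rpow_pos_of_pos (by positivity) _
  set L : ℝ := (2*m + 2*δ) * C0 with hL
  have hLpos : 0 < L := by
    apply mul_pos _ hC0pos
    linarith
  have hIccsub : ∀ μ ∈ Metric.ball m δ, Set.uIcc (2*μ) (2*m) ⊆ Icc (2*m-2*δ) (2*m+2*δ) := by
    intro μ hμ
    rw [Metric.mem_ball, Real.dist_eq] at hμ
    have h := abs_lt.1 hμ
    apply Set.uIcc_subset_Icc
    · constructor <;> [linarith [h.1]; linarith [h.2]]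
    · constructor <;> linarith
  have hLip : ∀ μ ∈ Metric.ball m δ, ∀ s ∈ Icc (2*m-2*δ) (2*m+2*δ),
      ‖fInt μ s - fInt m s‖ ≤ L * ‖μ - m‖ := by
    intro μ hμ s hsIcc
    have hds : ∀ x ∈ Metric.ball m δ,
        HasDerivWithinAt (fun x => fInt x s) (kInt x s) (Metric.ball m δ) x := by
      intro x hx
      exact (hasDerivAt_fInt (hspos s hsIcc.1)
        (by nlinarith [key x hx s hsIcc.1])).hasDerivWithinAt
    have hbd : ∀ x ∈ Metric.ball m δ, ‖kInt x s‖ ≤ L := by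
      intro x hx
      have hkey := key x hx s hsIcc.1
      have hs0 := hspos s hsIcc.1
      have hhpos : (0:ℝ) < 1 + s^2 - 2*x/s := by nlinarith
      simp only [kInt]
      rw [Real.norm_eq_abs,
        abs_of_nonneg (le_of_lt (mul_pos hs0 (Real.rpow_pos_of_pos hhpos _)))]
      have h1 : (1 + s^2 - 2*x/s) ^ (-(3:ℝ)/2) ≤ C0 :=
        Real.rpow_le_rpow_of_nonpos (by positivity) hkey (by norm_num)
      calc s * (1 + s^2 - 2*x/s) ^ (-(3:ℝ)/2) ≤ s * C0 :=
            mul_le_mul_of_nonneg_left h1 hs0.le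
        _ ≤ (2*m+2*δ) * C0 := mul_le_mul_of_nonneg_right hsIcc.2 hC0pos.le
    exact (convex_ball m δ).norm_image_sub_le_of_norm_hasDerivWithin_le hds hbd hmem hμ
  have hB : HasDerivAt (fun μ => ∫ s in (2*μ)..(2*m), (fInt μ s - fInt m s)) 0 m := by
    rw [hasDerivAt_iff_isLittleO]
    have hbig : (fun μ => ∫ s in (2*μ)..(2*m), (fInt μ s - fInt m s))
        =O[𝓝 m] (fun μ => (μ - m) * (μ - m)) := by
      rw [Asymptotics.isBigO_iff]
      refine ⟨2 * L, ?_⟩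
      filter_upwards [Metric.ball_mem_nhds m hδ0] with μ hμ
      have hsub : Set.uIoc (2*μ) (2*m) ⊆ Icc (2*m-2*δ) (2*m+2*δ) :=
        Set.uIoc_subset_uIcc.trans (hIccsub μ hμ)
      have hptw : ∀ s ∈ Set.uIoc (2*μ) (2*m), ‖fInt μ s - fInt m s‖ ≤ L * ‖μ - m‖ :=
        fun s hs => hLip μ hμ s (hsub hs)
      have hint := intervalIntegral.norm_integral_le_of_norm_le_const hptw
      have habs : |2*m - 2*μ| = 2 * |μ - m| := by
        rw [show (2*m - 2*μ : ℝ) = -(2*(μ - m)) by ring, abs_neg, abs_mul]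
        norm_num
      rw [habs] at hint
      rw [Real.norm_eq_abs, Real.norm_eq_abs] at *
      calc |∫ s in (2*μ)..(2*m), (fInt μ s - fInt m s)| ≤ L * |μ - m| * (2 * |μ - m|) := hint
        _ = 2 * L * |(μ - m) * (μ - m)| := by
            rw [abs_mul]; ring
    have hlit : (fun μ : ℝ => (μ-m)*(μ-m)) =o[𝓝 m] (fun μ => μ - m) := by
      have h1 : (fun μ : ℝ => μ - m) =o[𝓝 m] (fun _ => (1:ℝ)) := by
        rw [Asymptotics.isLittleO_one_iff]
        have : Tendsto (fun μ : ℝ => μ - m) (𝓝 m) (𝓝 (m - m)) :=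
          (continuous_id.sub continuous_const).tendsto m
        simpa using this
      simpa using h1.mul_isBigO (Asymptotics.isBigO_refl (fun μ : ℝ => μ - m) (𝓝 m))
    have := hbig.trans_isLittleO hlit
    simpa [intervalIntegral.integral_same] using this
  -- assembly
  have hsum := (hA1.add hB).add hφ
  have heq : (fun μ => ((∫ s in (2*μ)..(2*m), fInt m s)
        + ∫ s in (2*μ)..(2*m), (fInt μ s - fInt m s)) + ∫ s in (2*m)..R, fInt μ s)
      =ᶠ[𝓝 m] (fun μ => ∫ s in (2*μ)..R, fInt μ s) := by
    filter_upwards [Metric.ball_mem_nhds m hδ0] with μ hμ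
    have hIci : Set.uIcc (2*μ) (2*m) ⊆ Ici (2*m - 2*δ) :=
      (hIccsub μ hμ).trans Icc_subset_Ici_self
    have hi1 : IntervalIntegrable (fun s => fInt m s) volume (2*μ) (2*m) :=
      ((hcont m hmem).mono hIci).intervalIntegrable
    have hi2 : IntervalIntegrable (fun s => fInt μ s) volume (2*μ) (2*m) :=
      ((hcont μ hμ).mono hIci).intervalIntegrable
    have hi3 : IntervalIntegrable (fun s => fInt μ s) volume (2*m) R :=
      ((hcont μ hμ).mono huIcc).intervalIntegrable
    have e1 : (∫ s in (2*μ)..(2*m), fInt m s)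
        + ∫ s in (2*μ)..(2*m), (fInt μ s - fInt m s) = ∫ s in (2*μ)..(2*m), fInt μ s := by
      rw [← intervalIntegral.integral_add hi1 (hi2.sub hi1)]
      exact intervalIntegral.integral_congr fun s _ => by ring
    rw [e1]
    exact intervalIntegral.integral_add_adjacent_intervals hi2 hi3
  have hfinal := hsum.congr_of_eventuallyEq heq.symm
  exact hfinal.congr_deriv (by ring)

noncomputable def Lval (m : ℝ) : ℝ :=
  4 * π * (∫ s in Ioi (2*m), (fInt m s - f0 s)) - 4 * π * (∫ s in (0:ℝ)..(2*m), f0 s)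

lemma tendsto_renorm {m : ℝ} (hm : 0 < m) :
    Tendsto (fun R => sAdSVol m R - hypVol R) atTop (𝓝 (Lval m)) := by
  have h1 := intervalIntegral_tendsto_integral_Ioi (2*m)
    (integrableOn_fInt_sub_f0 hm) (tendsto_id (x := atTop))
  have h2 : Tendsto (fun R => 4 * π * (∫ s in (2*m)..R, (fInt m s - f0 s))
      - 4 * π * (∫ s in (0:ℝ)..(2*m), f0 s)) atTop (𝓝 (Lval m)) :=
    ((h1.const_mul (4*π)).sub_const _)
  apply h2.congr'
  filter_upwards [eventually_ge_atTop (2*m)] with R hR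
  have hf0i : ∀ a b : ℝ, IntervalIntegrable f0 volume a b := fun a b =>
    cont_f0.intervalIntegrable a b
  have hfmi : IntervalIntegrable (fun s => fInt m s) volume (2*m) R :=
    ((contOn_fInt hm le_rfl).mono (by rw [Set.uIcc_of_le hR]; exact Icc_subset_Ici_self)).intervalIntegrable
  have e1 : ∫ s in (2*m)..R, (fInt m s - f0 s)
      = (∫ s in (2*m)..R, fInt m s) - ∫ s in (2*m)..R, f0 s :=
    intervalIntegral.integral_sub hfmi (hf0i _ _)
  have e2 : (∫ s in (0:ℝ)..(2*m), f0 s) + (∫ s in (2*m)..R, f0 s) = ∫ s in (0:ℝ)..R, f0 s :=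
    intervalIntegral.integral_add_adjacent_intervals (hf0i _ _) (hf0i _ _)
  have : sAdSVol m R - hypVol R
      = 4 * π * ((∫ s in (2*m)..R, fInt m s) - (∫ s in (0:ℝ)..(2*m), f0 s) - ∫ s in (2*m)..R, f0 s) := by
    rw [sAdSVol, hypVol]
    have : (∫ s in (0:ℝ)..R, (fun s => s ^ 2 / Real.sqrt (1 + s ^ 2)) s) = ∫ s in (0:ℝ)..R, f0 s := rfl
    rw [show (∫ s in (0:ℝ)..R, s ^ 2 / Real.sqrt (1 + s ^ 2)) = ∫ s in (0:ℝ)..R, f0 s from rfl,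
      show (∫ s in (2*m)..R, s ^ 2 / Real.sqrt (1 + s ^ 2 - 2 * m / s))
        = ∫ s in (2*m)..R, fInt m s from rfl, ← e2]
    ring
  rw [this, e1]
  ring

lemma renormVol_eq {m : ℝ} (hm : 0 < m) : renormVol m = Lval m :=
  (tendsto_renorm hm).limUnder_eq

lemma integral_kInt_split {m R : ℝ} (hm : 0 < m) (hR : 2*m ≤ R) :
    ∫ s in Ioi (2*m), kInt m s = (∫ s in (2*m)..R, kInt m s) + ∫ s in Ioi R, kInt m s := by
  rw [intervalIntegral.integral_of_le hR, ← Set.Ioc_union_Ioi_eq_Ioi hR,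
    MeasureTheory.setIntegral_union (Set.Ioc_disjoint_Ioi le_rfl) measurableSet_Ioi
      ((integrableOn_kInt hm le_rfl).mono_set Set.Ioc_subset_Ioi_self)
      (integrableOn_kInt hm hR)]

lemma tail_bound {m R : ℝ} (hm : 0 < m) (hR : 2*m ≤ R) :
    ∫ s in Ioi R, kInt m s ≤ 1/R := by
  have hR0 : 0 < R := lt_of_lt_of_le (by linarith) hR
  have h1 : ∫ s in Ioi R, kInt m s ≤ ∫ s in Ioi R, s^(-2:ℝ) := by
    apply setIntegral_mono_on (integrableOn_kInt hm hR)
      (integrableOn_Ioi_rpow_of_lt (by norm_num) hR0) measurableSet_Ioi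
    exact fun s hs => kInt_le hm (le_trans hR (le_of_lt hs))
  have h2 : ∫ s in Ioi R, s^(-2:ℝ) = 1/R := by
    rw [integral_Ioi_rpow_of_lt (by norm_num) hR0]
    norm_num [Real.rpow_neg_one]
  linarith [h1, h2.le, h2.ge]

lemma tail_nonneg {m R : ℝ} (hm : 0 < m) (hR : 2*m ≤ R) :
    0 ≤ ∫ s in Ioi R, kInt m s :=
  setIntegral_nonneg measurableSet_Ioi fun s hs =>
    kInt_nonneg hm (le_trans hR (le_of_lt hs))

/-- `m ↦ V_m` is differentiable on `(0,∞)` with derivative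
`-16πm + 4π ∫_{2m}^∞ s (1+s²-2m/s)^(-3/2) ds`. -/
theorem renormVol_hasDerivAt (m : ℝ) (hm : 0 < m) :
    HasDerivAt renormVol
      (-16 * π * m
        + 4 * π * ∫ s in Set.Ioi (2 * m), s * (1 + s ^ 2 - 2 * m / s) ^ (-(3:ℝ)/2)) m := by
  have hgoal : (∫ s in Set.Ioi (2 * m), s * (1 + s ^ 2 - 2 * m / s) ^ (-(3:ℝ)/2))
      = ∫ s in Ioi (2*m), kInt m s := rfl
  rw [hgoal]
  have main := hasDerivAt_of_tendstoUniformlyOn (l := atTop)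
    (f := fun R μ => sAdSVol μ R - hypVol R)
    (f' := fun R μ => -16 * π * μ + 4 * π * ∫ s in (2*μ)..R, kInt μ s)
    (g := renormVol)
    (g' := fun μ => -16 * π * μ + 4 * π * ∫ s in Ioi (2*μ), kInt μ s)
    (isOpen_Ioo (a := 0) (b := m+1)) ?_ ?_ ?_ (⟨hm, by linarith⟩ : m ∈ Ioo 0 (m+1))
  · exact main
  · -- uniform convergence of derivatives
    rw [Metric.tendstoUniformlyOn_iff]
    intro ε hε
    have h4π : 0 < 4*π := by positivity
    filter_upwards [eventually_gt_atTop (max (2*(m+1)) (4*π/ε))] with R hR μ hμ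
    have hR1 : 2*(m+1) < R := lt_of_le_of_lt (le_max_left _ _) hR
    have hR2 : 4*π/ε < R := lt_of_le_of_lt (le_max_right _ _) hR
    have hμ0 : 0 < μ := hμ.1
    have h2μ : 2*μ ≤ R := by have := hμ.2; linarith
    have hR0 : 0 < R := by linarith [hμ0]
    rw [Real.dist_eq]
    have hsplit := integral_kInt_split hμ0 h2μ
    have e : (-16 * π * μ + 4 * π * ∫ s in Ioi (2*μ), kInt μ s)
        - (-16 * π * μ + 4 * π * ∫ s in (2*μ)..R, kInt μ s)
        = 4 * π * ∫ s in Ioi R, kInt μ s := by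
      rw [hsplit]; ring
    rw [e, abs_of_nonneg (mul_nonneg h4π.le (tail_nonneg hμ0 h2μ))]
    have := tail_bound hμ0 h2μ
    calc 4 * π * ∫ s in Ioi R, kInt μ s ≤ 4 * π * (1/R) :=
          mul_le_mul_of_nonneg_left this h4π.le
      _ < ε := by
          rw [mul_one_div, div_lt_iff₀ hR0]
          rw [div_lt_iff₀ hε] at hR2
          linarith [hR2]
  · -- eventual differentiability
    filter_upwards [eventually_gt_atTop (2*(m+1))] with R hR μ hμ
    have h2μ : 2*μ < R := by have := hμ.2; linarith
    have hder := ((lemA hμ.1 h2μ).const_mul (4*π)).sub_const (hypVol R)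
    have heq : (fun μ => (4*π * ∫ s in (2*μ)..R, fInt μ s) - hypVol R)
        = fun μ => sAdSVol μ R - hypVol R := rfl
    rw [heq] at hder
    convert hder using 1
    ring
  · -- pointwise convergence
    intro μ hμ
    rw [renormVol_eq hμ.1]
    exact tendsto_renorm hμ.1
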